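/- arXiv:1502.00241 — 3 statements merged into one kernel-verified Lean document; each statement's English description precedes it below -/
import Mathlib

section
/- Every triangle (including degenerate ones) in ℝ² is similar to a triangle with vertices A=(0,0), C=(1,0), and B=(x,y) where y ≥ 0, x² + y² ≥ 1, and (x-1)² + y² ≤ 1. -/
open Real EuclideanGeometry

/-- A point of the Euclidean plane given by Cartesian coordinates. -/
noncomputable def pt (x y : ℝ) : EuclideanSpace ℝ (Fin 2) := !₂[x, y]

/-- A plane similarity transformation: a map multiplying all distances by a
fixed positive ratio (equivalently, a composition of translations, rotations,
reflections and dilations). -/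
def IsPlaneSimilarity (f : EuclideanSpace ℝ (Fin 2) → EuclideanSpace ℝ (Fin 2)) : Prop :=
  ∃ r : ℝ, 0 < r ∧ ∀ p q, dist (f p) (f q) = r * dist p q

noncomputable def eC (z : ℂ) : EuclideanSpace ℝ (Fin 2) := !₂[z.re, z.im]
noncomputable def toC (p : EuclideanSpace ℝ (Fin 2)) : ℂ := ⟨p 0, p 1⟩

lemma dist_euc (p q : EuclideanSpace ℝ (Fin 2)) :
    dist p q = Real.sqrt ((p 0 - q 0)^2 + (p 1 - q 1)^2) := by
  rw [EuclideanSpace.dist_eq, Fin.sum_univ_two]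
  simp [Real.dist_eq, sq_abs]

lemma dist_eC (u v : ℂ) : dist (eC u) (eC v) = dist u v := by
  rw [dist_euc, Complex.dist_eq, Complex.norm_def, Complex.normSq_apply, Complex.sub_re, Complex.sub_im]
  simp [eC]; ring_nf

lemma dist_toC (p q : EuclideanSpace ℝ (Fin 2)) : dist (toC p) (toC q) = dist p q := by
  rw [dist_euc, Complex.dist_eq, Complex.norm_def, Complex.normSq_apply, Complex.sub_re, Complex.sub_im]
  simp [toC]; ring_nf

lemma toC_inj {p q : EuclideanSpace ℝ (Fin 2)} (h : toC p = toC q) : p = q := by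
  ext i
  fin_cases i
  · exact congrArg Complex.re h
  · exact congrArg Complex.im h

lemma eC_pt (z : ℂ) : eC z = pt z.re z.im := rfl

lemma key (A B C : EuclideanSpace ℝ (Fin 2)) (hne : ¬ (A = B ∧ B = C ∧ A = C))
    (h1 : dist A C ≤ dist A B) (h2 : dist B C ≤ dist A C) :
    ∃ x y : ℝ, 0 ≤ y ∧ 1 ≤ x^2 + y^2 ∧ (x - 1)^2 + y^2 ≤ 1 ∧
      ∃ f : EuclideanSpace ℝ (Fin 2) → EuclideanSpace ℝ (Fin 2),
        IsPlaneSimilarity f ∧ f A = pt 0 0 ∧ f B = pt x y ∧ f C = pt 1 0 := by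
  have hAC : A ≠ C := by
    rintro rfl
    have hBC : B = A := by
      have := h2.trans_eq (dist_self A)
      exact dist_le_zero.mp this
    exact hne ⟨hBC.symm, hBC, rfl⟩
  set a := toC A with ha
  set b := toC B with hb
  set c := toC C with hc
  have hca : c - a ≠ 0 := sub_ne_zero.mpr (fun h => hAC (toC_inj h).symm)
  have hdAC : dist A C = ‖c - a‖ := by
    rw [← dist_toC, Complex.dist_eq, norm_sub_rev]
  have hdpos : 0 < dist A C := by
    rw [hdAC]; exact norm_pos_iff.mpr hca
  set w : ℂ := (b - a) / (c - a) with hw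
  have habs : ‖w‖ = dist A B / dist A C := by
    rw [hw, norm_div, hdAC, ← dist_toC, Complex.dist_eq, norm_sub_rev]
  have habs1 : ‖w - 1‖ = dist B C / dist A C := by
    have : w - 1 = (b - c) / (c - a) := by
      rw [hw]; field_simp; ring
    rw [this, norm_div, hdAC, ← dist_toC, Complex.dist_eq]
  have hn1 : 1 ≤ Complex.normSq w := by
    rw [← Complex.sq_norm, habs]
    have : 1 ≤ dist A B / dist A C := (one_le_div hdpos).mpr h1
    nlinarith
  have hn2 : Complex.normSq (w - 1) ≤ 1 := by
    rw [← Complex.sq_norm, habs1]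
    have h0 : 0 ≤ dist B C / dist A C := div_nonneg dist_nonneg hdpos.le
    have : dist B C / dist A C ≤ 1 := (div_le_one hdpos).mpr h2
    nlinarith
  have hsim : ∀ (g : ℂ → ℂ), (∀ u v, dist (g u) (g v) = dist u v) →
      IsPlaneSimilarity (fun p => eC (g ((toC p - a) / (c - a)))) := by
    intro g hg
    refine ⟨(‖c - a‖)⁻¹, inv_pos.mpr (norm_pos_iff.mpr hca), fun p q => ?_⟩
    rw [dist_eC, hg, Complex.dist_eq, div_sub_div_same, norm_div, ← dist_toC, Complex.dist_eq]
    rw [div_eq_inv_mul]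
    congr 2
    ring
  by_cases hy : 0 ≤ w.im
  · refine ⟨w.re, w.im, hy, ?_, ?_, fun p => eC ((toC p - a) / (c - a)), hsim id (fun _ _ => rfl), ?_, ?_, ?_⟩
    · have h := hn1; rw [Complex.normSq_apply] at h; nlinarith
    · have h := hn2
      rw [Complex.normSq_apply, Complex.sub_re, Complex.sub_im, Complex.one_re, Complex.one_im] at h
      nlinarith
    · show eC ((a - a) / (c - a)) = pt 0 0
      rw [sub_self, zero_div, eC_pt]; norm_num
    · exact eC_pt w
    · show eC ((c - a) / (c - a)) = pt 1 0
      rw [div_self hca, eC_pt]; norm_num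
  · refine ⟨w.re, -w.im, by linarith, ?_, ?_,
      fun p => eC ((starRingEnd ℂ) ((toC p - a) / (c - a))),
      hsim _ (fun u v => Complex.dist_conj_conj u v), ?_, ?_, ?_⟩
    · have h := hn1; rw [Complex.normSq_apply] at h; nlinarith
    · have h := hn2
      rw [Complex.normSq_apply, Complex.sub_re, Complex.sub_im, Complex.one_re, Complex.one_im] at h
      nlinarith
    · show eC ((starRingEnd ℂ) ((a - a) / (c - a))) = pt 0 0
      rw [sub_self, zero_div, map_zero, eC_pt]; norm_num
    · show eC ((starRingEnd ℂ) w) = pt w.re (-w.im)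
      rw [eC_pt]; simp
    · show eC ((starRingEnd ℂ) ((c - a) / (c - a))) = pt 1 0
      rw [div_self hca, map_one, eC_pt]; norm_num

lemma swap12 {α : Type*} (a b c : α) : ({a,b,c} : Multiset α) = {b,a,c} := by
  simp only [Multiset.insert_eq_cons]; exact Multiset.cons_swap a b {c}

lemma swap23 {α : Type*} (a b c : α) : ({a,b,c} : Multiset α) = {a,c,b} := by
  simp only [Multiset.insert_eq_cons]; congr 1; exact Multiset.pair_comm b c

lemma main_aux (A B C : EuclideanSpace ℝ (Fin 2)) (hne : ¬ (A = B ∧ B = C ∧ A = C))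
    (h1 : dist A C ≤ dist A B) (h2 : dist B C ≤ dist A C) :
    ∃ x y : ℝ, 0 ≤ y ∧ 1 ≤ x^2 + y^2 ∧ (x - 1)^2 + y^2 ≤ 1 ∧
      ∃ f : EuclideanSpace ℝ (Fin 2) → EuclideanSpace ℝ (Fin 2),
        IsPlaneSimilarity f ∧
        Multiset.map f {A, B, C} = ({pt 0 0, pt x y, pt 1 0} : Multiset (EuclideanSpace ℝ (Fin 2))) := by
  obtain ⟨x, y, hy, hx1, hx2, f, hf, hA, hB, hC⟩ := key A B C hne h1 h2
  exact ⟨x, y, hy, hx1, hx2, f, hf, by simp [hA, hB, hC]⟩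

/-- Every triangle (including degenerate ones) is similar to one with vertices
(0,0), (1,0) and a point of S_B. -/
theorem stmt2 (U V W : EuclideanSpace ℝ (Fin 2)) (h : ¬ (U = V ∧ V = W ∧ U = W)) :
    ∃ x y : ℝ, 0 ≤ y ∧ 1 ≤ x^2 + y^2 ∧ (x - 1)^2 + y^2 ≤ 1 ∧
      ∃ f : EuclideanSpace ℝ (Fin 2) → EuclideanSpace ℝ (Fin 2),
        IsPlaneSimilarity f ∧
        Multiset.map f {U, V, W} = ({pt 0 0, pt x y, pt 1 0} : Multiset (EuclideanSpace ℝ (Fin 2))) := by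
  rcases le_total (dist U V) (dist V W) with h12 | h12 <;>
    rcases le_total (dist V W) (dist U W) with h23 | h23 <;>
      rcases le_total (dist U V) (dist U W) with h13 | h13
  -- 1: d1 ≤ d2 ≤ d3 : A=W B=U C=V
  · obtain ⟨x, y, hy, hx1, hx2, f, hf, hm⟩ := main_aux W U V
      (by rintro ⟨rfl, rfl, -⟩; exact h ⟨rfl, rfl, rfl⟩)
      (by rw [dist_comm W V, dist_comm W U]; exact h23)
      (by rw [dist_comm W V]; exact h12)
    exact ⟨x, y, hy, hx1, hx2, f, hf, by rw [show ({U,V,W} : Multiset _) = {W,U,V} by rw [swap23, swap12]]; exact hm⟩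
  -- 2: d1 ≤ d2, d2 ≤ d3, d3 ≤ d1 : all equal; same labeling as 1
  · obtain ⟨x, y, hy, hx1, hx2, f, hf, hm⟩ := main_aux W U V
      (by rintro ⟨rfl, rfl, -⟩; exact h ⟨rfl, rfl, rfl⟩)
      (by rw [dist_comm W V, dist_comm W U]; exact h23)
      (by rw [dist_comm W V]; exact h12)
    exact ⟨x, y, hy, hx1, hx2, f, hf, by rw [show ({U,V,W} : Multiset _) = {W,U,V} by rw [swap23, swap12]]; exact hm⟩
  -- 3: d1 ≤ d3 ≤ d2 : A=W B=V C=U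
  · obtain ⟨x, y, hy, hx1, hx2, f, hf, hm⟩ := main_aux W V U
      (by rintro ⟨rfl, rfl, -⟩; exact h ⟨rfl, rfl, rfl⟩)
      (by rw [dist_comm W U, dist_comm W V]; exact h23)
      (by rw [dist_comm W U, dist_comm V U]; exact h13)
    exact ⟨x, y, hy, hx1, hx2, f, hf, by rw [show ({U,V,W} : Multiset _) = {W,V,U} by rw [swap12, swap23, swap12]]; exact hm⟩
  -- 4: d3 ≤ d1 ≤ d2 : A=V B=W C=U
  · obtain ⟨x, y, hy, hx1, hx2, f, hf, hm⟩ := main_aux V W U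
      (by rintro ⟨rfl, rfl, -⟩; exact h ⟨rfl, rfl, rfl⟩)
      (by rw [dist_comm V U]; exact h12)
      (by rw [dist_comm W U, dist_comm V U]; exact h13)
    exact ⟨x, y, hy, hx1, hx2, f, hf, by rw [show ({U,V,W} : Multiset _) = {V,W,U} by rw [swap12, swap23]]; exact hm⟩
  -- 5: d2 ≤ d1 ≤ d3 : A=U B=W C=V
  · obtain ⟨x, y, hy, hx1, hx2, f, hf, hm⟩ := main_aux U W V
      (by rintro ⟨rfl, rfl, -⟩; exact h ⟨rfl, rfl, rfl⟩)
      h13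
      (by rw [dist_comm W V]; exact h12)
    exact ⟨x, y, hy, hx1, hx2, f, hf, by rw [show ({U,V,W} : Multiset _) = {U,W,V} from swap23 U V W]; exact hm⟩
  -- 6: d2 ≤ d3 ≤ d1 : A=U B=V C=W
  · obtain ⟨x, y, hy, hx1, hx2, f, hf, hm⟩ := main_aux U V W
      (by rintro ⟨rfl, rfl, -⟩; exact h ⟨rfl, rfl, rfl⟩)
      h13
      h23
    exact ⟨x, y, hy, hx1, hx2, f, hf, hm⟩
  -- 7: d3 ≤ d2 ≤ d1, d1 ≤ d3 : all equal; same labeling as 8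
  · obtain ⟨x, y, hy, hx1, hx2, f, hf, hm⟩ := main_aux V U W
      (by rintro ⟨rfl, rfl, -⟩; exact h ⟨rfl, rfl, rfl⟩)
      (by rw [dist_comm V U]; exact h12)
      h23
    exact ⟨x, y, hy, hx1, hx2, f, hf, by rw [show ({U,V,W} : Multiset _) = {V,U,W} from swap12 U V W]; exact hm⟩
  -- 8: d3 ≤ d2 ≤ d1 : A=V B=U C=W
  · obtain ⟨x, y, hy, hx1, hx2, f, hf, hm⟩ := main_aux V U W
      (by rintro ⟨rfl, rfl, -⟩; exact h ⟨rfl, rfl, rfl⟩)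
      (by rw [dist_comm V U]; exact h12)
      h23
    exact ⟨x, y, hy, hx1, hx2, f, hf, by rw [show ({U,V,W} : Multiset _) = {V,U,W} from swap12 U V W]; exact hm⟩
end

section
/- If A₁ and A₂ are distinct points in S_A = {(x,y) : y ≥ 0, x ≥ 1/2, (x-1)² + y² ≥ 1}, then the triangles with vertices A₁, (0,0), (1,0) and A₂, (0,0), (1,0) are not similar. -/
open Real EuclideanGeometry

lemma dist0 (A : EuclideanSpace ℝ (Fin 2)) :
    dist A (pt 0 0) = Real.sqrt ((A 0)^2 + (A 1)^2) := by
  rw [EuclideanSpace.dist_eq, Fin.sum_univ_two]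
  simp [pt, Real.dist_eq, sq_abs]

lemma dist1 (A : EuclideanSpace ℝ (Fin 2)) :
    dist A (pt 1 0) = Real.sqrt ((A 0 - 1)^2 + (A 1)^2) := by
  rw [EuclideanSpace.dist_eq, Fin.sum_univ_two]
  simp only [pt, WithLp.ofLp_toLp, Real.dist_eq, sq_abs, Matrix.cons_val_zero, Matrix.cons_val_one, Matrix.head_cons,
    sub_zero]

lemma dBC : dist (pt 0 0) (pt 1 0) = 1 := by
  rw [dist1]; simp [pt]

lemma rigid (A₁ A₂ : EuclideanSpace ℝ (Fin 2)) (hy1 : 0 ≤ A₁ 1) (hy2 : 0 ≤ A₂ 1)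
    (ha : dist A₁ (pt 0 0) = dist A₂ (pt 0 0)) (hb : dist A₁ (pt 1 0) = dist A₂ (pt 1 0)) :
    A₁ = A₂ := by
  rw [dist0, dist0] at ha
  rw [dist1, dist1] at hb
  have ha' : (A₁ 0)^2 + (A₁ 1)^2 = (A₂ 0)^2 + (A₂ 1)^2 :=
    (Real.sqrt_inj (by positivity) (by positivity)).1 ha
  have hb' : (A₁ 0 - 1)^2 + (A₁ 1)^2 = (A₂ 0 - 1)^2 + (A₂ 1)^2 :=
    (Real.sqrt_inj (by positivity) (by positivity)).1 hb
  have hx : A₁ 0 = A₂ 0 := by nlinarith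
  have hy : A₁ 1 = A₂ 1 := by nlinarith
  ext i
  fin_cases i
  · exact hx
  · exact hy

lemma ords (A : EuclideanSpace ℝ (Fin 2))
    (h : 0 ≤ A 1 ∧ 1/2 ≤ A 0 ∧ 1 ≤ (A 0 - 1)^2 + (A 1)^2) :
    1 ≤ dist A (pt 1 0) ∧ dist A (pt 1 0) ≤ dist A (pt 0 0) := by
  obtain ⟨hy, hx, hc⟩ := h
  rw [dist0, dist1]
  constructor
  · have := Real.sqrt_le_sqrt (show (1:ℝ) ≤ (A 0 - 1)^2 + (A 1)^2 by linarith)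
    simpa using this
  · exact Real.sqrt_le_sqrt (by nlinarith)

lemma key_s5 (a₁ b₁ a₂ b₂ r : ℝ) (hr : 0 < r)
    (o1 : 1 ≤ b₁) (o2 : b₁ ≤ a₁) (o3 : 1 ≤ b₂) (o4 : b₂ ≤ a₂)
    (h : (a₂ = r*a₁ ∧ b₂ = r*b₁ ∧ (1:ℝ) = r) ∨
         (a₂ = r*a₁ ∧ (1:ℝ) = r*b₁ ∧ b₂ = r) ∨
         (b₂ = r*a₁ ∧ a₂ = r*b₁ ∧ (1:ℝ) = r) ∨
         (b₂ = r*a₁ ∧ (1:ℝ) = r*b₁ ∧ a₂ = r) ∨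
         ((1:ℝ) = r*a₁ ∧ a₂ = r*b₁ ∧ b₂ = r) ∨
         ((1:ℝ) = r*a₁ ∧ b₂ = r*b₁ ∧ a₂ = r)) :
    a₁ = a₂ ∧ b₁ = b₂ := by
  rcases h with ⟨e1,e2,e3⟩|⟨e1,e2,e3⟩|⟨e1,e2,e3⟩|⟨e1,e2,e3⟩|⟨e1,e2,e3⟩|⟨e1,e2,e3⟩ <;>
    [skip; skip; skip; skip; skip; skip] <;>
    (have hr1 : r = 1 := by nlinarith) <;> subst hr1 <;> constructor <;> linarith

lemma neB (A : EuclideanSpace ℝ (Fin 2))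
    (h : 0 ≤ A 1 ∧ 1/2 ≤ A 0 ∧ 1 ≤ (A 0 - 1)^2 + (A 1)^2) : A ≠ pt 0 0 := by
  intro he
  have : A 0 = 0 := by rw [he]; simp [pt]
  linarith [h.2.1]

lemma neC (A : EuclideanSpace ℝ (Fin 2))
    (h : 0 ≤ A 1 ∧ 1/2 ≤ A 0 ∧ 1 ≤ (A 0 - 1)^2 + (A 1)^2) : A ≠ pt 1 0 := by
  intro he
  have h0 : A 0 = 1 := by rw [he]; simp [pt]
  have h1 : A 1 = 0 := by rw [he]; simp [pt]
  rw [h0, h1] at h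
  norm_num at h

set_option maxHeartbeats 800000 in
/-- Distinct points of S_A give non-similar triangles on the base (0,0)-(1,0). -/
theorem stmt5 (A₁ A₂ : EuclideanSpace ℝ (Fin 2))
    (h₁ : 0 ≤ A₁ 1 ∧ 1/2 ≤ A₁ 0 ∧ 1 ≤ (A₁ 0 - 1)^2 + (A₁ 1)^2)
    (h₂ : 0 ≤ A₂ 1 ∧ 1/2 ≤ A₂ 0 ∧ 1 ≤ (A₂ 0 - 1)^2 + (A₂ 1)^2)
    (hne : A₁ ≠ A₂) :
    ¬ ∃ f : EuclideanSpace ℝ (Fin 2) → EuclideanSpace ℝ (Fin 2),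
        IsPlaneSimilarity f ∧
        Multiset.map f {A₁, pt 0 0, pt 1 0} = ({A₂, pt 0 0, pt 1 0} : Multiset (EuclideanSpace ℝ (Fin 2))) := by
  rintro ⟨f, ⟨r, hr, hf⟩, hmap⟩
  have hinj : Function.Injective f := by
    intro p q h
    have := hf p q
    rw [h, dist_self] at this
    have : dist p q = 0 := by
      rcases mul_eq_zero.1 this.symm with h' | h'
      · exact absurd h' (ne_of_gt hr)
      · exact h'
    exact dist_eq_zero.1 this
  have mA : f A₁ = A₂ ∨ f A₁ = pt 0 0 ∨ f A₁ = pt 1 0 := by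
    have : f A₁ ∈ ({A₂, pt 0 0, pt 1 0} : Multiset (EuclideanSpace ℝ (Fin 2))) := by
      rw [← hmap]; exact Multiset.mem_map_of_mem f (by simp)
    simpa using this
  have mB : f (pt 0 0) = A₂ ∨ f (pt 0 0) = pt 0 0 ∨ f (pt 0 0) = pt 1 0 := by
    have : f (pt 0 0) ∈ ({A₂, pt 0 0, pt 1 0} : Multiset (EuclideanSpace ℝ (Fin 2))) := by
      rw [← hmap]; exact Multiset.mem_map_of_mem f (by simp)
    simpa using this
  have mC : f (pt 1 0) = A₂ ∨ f (pt 1 0) = pt 0 0 ∨ f (pt 1 0) = pt 1 0 := by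
    have : f (pt 1 0) ∈ ({A₂, pt 0 0, pt 1 0} : Multiset (EuclideanSpace ℝ (Fin 2))) := by
      rw [← hmap]; exact Multiset.mem_map_of_mem f (by simp)
    simpa using this
  have n1B := neB A₁ h₁
  have n1C := neC A₁ h₁
  have hBC : (pt 0 0 : EuclideanSpace ℝ (Fin 2)) ≠ pt 1 0 := by
    intro he
    have := dBC
    rw [he, dist_self] at this
    norm_num at this
  obtain ⟨o1, o2⟩ := ords A₁ h₁
  obtain ⟨o3, o4⟩ := ords A₂ h₂
  have e1 := hf A₁ (pt 0 0)
  have e2 := hf A₁ (pt 1 0)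
  have e3 := hf (pt 0 0) (pt 1 0)
  rw [dBC, mul_one] at e3
  have fin : dist A₁ (pt 0 0) = dist A₂ (pt 0 0) ∧ dist A₁ (pt 1 0) = dist A₂ (pt 1 0) := by
    rcases mA with g1|g1|g1 <;> rcases mB with g2|g2|g2 <;> rcases mC with g3|g3|g3 <;>
      first
      | exact absurd (hinj (g1.trans g2.symm)) n1B
      | exact absurd (hinj (g1.trans g3.symm)) n1C
      | exact absurd (hinj (g2.trans g3.symm)) hBC
      | (rw [g1, g2] at e1; rw [g1, g3] at e2; rw [g2, g3] at e3;
         simp only [dist_comm (pt 0 0) A₂, dist_comm (pt 1 0) A₂, dist_comm (pt 1 0) (pt 0 0),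
           dBC] at e1 e2 e3;
         exact key_s5 _ _ _ _ r hr o1 o2 o3 o4 (by
           first
           | exact Or.inl ⟨e1, e2, e3⟩
           | exact Or.inr (Or.inl ⟨e1, e2, e3⟩)
           | exact Or.inr (Or.inr (Or.inl ⟨e1, e2, e3⟩))
           | exact Or.inr (Or.inr (Or.inr (Or.inl ⟨e1, e2, e3⟩)))
           | exact Or.inr (Or.inr (Or.inr (Or.inr (Or.inl ⟨e1, e2, e3⟩))))
           | exact Or.inr (Or.inr (Or.inr (Or.inr (Or.inr ⟨e1, e2, e3⟩))))))
  exact hne (rigid A₁ A₂ h₁.1 h₂.1 fin.1 fin.2)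
end

section
/- Let 0 < α ≤ β ≤ γ with α + β + γ = π. Let C = (1,0), A = (cos 2β, sin 2β), B = (cos 2α, −sin 2α) on the unit circle. Then the interior angle of triangle ABC at A equals α and the interior angle at B equals β (and hence the angle at C equals γ). -/
open Real EuclideanGeometry

lemma sub_pt (a b c d : ℝ) : pt a b - pt c d = pt (a-c) (b-d) := by
  simp [pt]; ext i; fin_cases i <;> simp

lemma inner_pt (a b c d : ℝ) : (inner ℝ (pt a b) (pt c d) : ℝ) = a*c + b*d := by
  simp [pt, EuclideanSpace.inner_eq_star_dotProduct, dotProduct, Fin.sum_univ_two]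
  ring

lemma norm_pt (a b : ℝ) : ‖pt a b‖ = Real.sqrt (a^2+b^2) := by
  rw [EuclideanSpace.norm_eq]
  simp [pt, Fin.sum_univ_two, sq]

lemma angle_pt (x1 y1 x2 y2 x3 y3 : ℝ) :
    EuclideanGeometry.angle (pt x1 y1) (pt x2 y2) (pt x3 y3) =
    Real.arccos (((x1-x2)*(x3-x2)+(y1-y2)*(y3-y2)) /
      (Real.sqrt ((x1-x2)^2+(y1-y2)^2) * Real.sqrt ((x3-x2)^2+(y3-y2)^2))) := by
  rw [EuclideanGeometry.angle, InnerProductGeometry.angle]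
  rw [show (pt x1 y1) -ᵥ (pt x2 y2) = pt (x1-x2) (y1-y2) from sub_pt _ _ _ _,
    show (pt x3 y3) -ᵥ (pt x2 y2) = pt (x3-x2) (y3-y2) from sub_pt _ _ _ _,
    inner_pt, norm_pt, norm_pt]

/-- The circle normal form: the inscribed triangle with C = (1,0),
A = (cos 2β, sin 2β), B = (cos 2α, -sin 2α) has angles α at A, β at B and γ at C. -/
theorem stmt13 (α β γ : ℝ) (hα : 0 < α) (hαβ : α ≤ β) (hβγ : β ≤ γ)
    (hsum : α + β + γ = π) :
    EuclideanGeometry.angle (pt (Real.cos (2*α)) (-Real.sin (2*α)))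
      (pt (Real.cos (2*β)) (Real.sin (2*β))) (pt 1 0) = α ∧
    EuclideanGeometry.angle (pt (Real.cos (2*β)) (Real.sin (2*β)))
      (pt (Real.cos (2*α)) (-Real.sin (2*α))) (pt 1 0) = β ∧
    EuclideanGeometry.angle (pt (Real.cos (2*β)) (Real.sin (2*β)))
      (pt 1 0) (pt (Real.cos (2*α)) (-Real.sin (2*α))) = γ := by
  have hpi := Real.pi_pos
  have hα2 : α < π/2 := by nlinarith
  have hβ2 : β < π/2 := by nlinarith
  have hγπ : γ < π := by nlinarith
  have hγ0 : 0 < γ := by nlinarith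
  have hab : α + β < π := by nlinarith
  have hsa : 0 < Real.sin α := Real.sin_pos_of_pos_of_lt_pi hα (by linarith)
  have hsb : 0 < Real.sin β := Real.sin_pos_of_pos_of_lt_pi (by linarith) (by linarith)
  have hsab : 0 < Real.sin (α+β) := Real.sin_pos_of_pos_of_lt_pi (by linarith) hab
  have pa := Real.sin_sq_add_cos_sq α
  have pb := Real.sin_sq_add_cos_sq β
  -- square roots
  have hs1 : Real.sqrt ((Real.cos (2*α) - Real.cos (2*β))^2 +
      (-Real.sin (2*α) - Real.sin (2*β))^2) = 2 * Real.sin (α+β) := by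
    rw [show (Real.cos (2*α) - Real.cos (2*β))^2 + (-Real.sin (2*α) - Real.sin (2*β))^2
        = (2 * Real.sin (α+β))^2 by
      rw [Real.sin_add, Real.cos_two_mul, Real.cos_two_mul, Real.sin_two_mul, Real.sin_two_mul]
      linear_combination (4*((Real.cos α)^2 - (Real.cos β)^2)) * pa
        - (4*((Real.cos α)^2 - (Real.cos β)^2)) * pb]
    exact Real.sqrt_sq (by positivity)
  have hs2 : Real.sqrt ((1 - Real.cos (2*β))^2 + (0 - Real.sin (2*β))^2)
      = 2 * Real.sin β := by
    rw [show (1 - Real.cos (2*β))^2 + (0 - Real.sin (2*β))^2 = (2 * Real.sin β)^2 by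
      rw [Real.cos_two_mul, Real.sin_two_mul]
      linear_combination (-4*(1 - (Real.cos β)^2)) * pb]
    exact Real.sqrt_sq (by positivity)
  have hs3 : Real.sqrt ((1 - Real.cos (2*α))^2 + (0 - -Real.sin (2*α))^2)
      = 2 * Real.sin α := by
    rw [show (1 - Real.cos (2*α))^2 + (0 - -Real.sin (2*α))^2 = (2 * Real.sin α)^2 by
      rw [Real.cos_two_mul, Real.sin_two_mul]
      linear_combination (-4*(1 - (Real.cos α)^2)) * pa]
    exact Real.sqrt_sq (by positivity)
  have hs2' : Real.sqrt ((Real.cos (2*β) - 1)^2 + (Real.sin (2*β) - 0)^2)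
      = 2 * Real.sin β := by
    rw [show (Real.cos (2*β) - 1)^2 + (Real.sin (2*β) - 0)^2
        = (1 - Real.cos (2*β))^2 + (0 - Real.sin (2*β))^2 by ring]
    exact hs2
  have hs3' : Real.sqrt ((Real.cos (2*α) - 1)^2 + (-Real.sin (2*α) - 0)^2)
      = 2 * Real.sin α := by
    rw [show (Real.cos (2*α) - 1)^2 + (-Real.sin (2*α) - 0)^2
        = (1 - Real.cos (2*α))^2 + (0 - -Real.sin (2*α))^2 by ring]
    exact hs3
  refine ⟨?_, ?_, ?_⟩
  · -- angle at A is α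
    rw [angle_pt, hs1, hs2]
    rw [show (Real.cos (2*α) - Real.cos (2*β)) * (1 - Real.cos (2*β)) +
        (-Real.sin (2*α) - Real.sin (2*β)) * (0 - Real.sin (2*β))
        = (2 * Real.sin (α+β)) * (2 * Real.sin β) * Real.cos α by
      rw [Real.sin_add, Real.cos_two_mul, Real.cos_two_mul, Real.sin_two_mul, Real.sin_two_mul]
      linear_combination (-4*((Real.cos α)^2 - (Real.cos β)^2)) * pb]
    rw [mul_div_cancel_left₀ _ (by positivity)]
    exact Real.arccos_cos (le_of_lt hα) (by linarith)
  · -- angle at B is β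
    rw [angle_pt]
    rw [show Real.sqrt ((Real.cos (2*β) - Real.cos (2*α))^2 +
        (Real.sin (2*β) - -Real.sin (2*α))^2) = 2 * Real.sin (α+β) by
      rw [show (Real.cos (2*β) - Real.cos (2*α))^2 + (Real.sin (2*β) - -Real.sin (2*α))^2
          = (Real.cos (2*α) - Real.cos (2*β))^2 + (-Real.sin (2*α) - Real.sin (2*β))^2 by ring]
      exact hs1, hs3]
    rw [show (Real.cos (2*β) - Real.cos (2*α)) * (1 - Real.cos (2*α)) +
        (Real.sin (2*β) - -Real.sin (2*α)) * (0 - -Real.sin (2*α))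
        = (2 * Real.sin (α+β)) * (2 * Real.sin α) * Real.cos β by
      rw [Real.sin_add, Real.cos_two_mul, Real.cos_two_mul, Real.sin_two_mul, Real.sin_two_mul]
      linear_combination (-4*((Real.cos β)^2 - (Real.cos α)^2)) * pa]
    rw [mul_div_cancel_left₀ _ (by positivity)]
    exact Real.arccos_cos (by linarith) (by linarith)
  · -- angle at C is γ
    rw [angle_pt, hs2', hs3']
    rw [show (Real.cos (2*β) - 1) * (Real.cos (2*α) - 1) +
        (Real.sin (2*β) - 0) * (-Real.sin (2*α) - 0)
        = (2 * Real.sin β) * (2 * Real.sin α) * (-Real.cos (α+β)) by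
      rw [Real.cos_add, Real.cos_two_mul, Real.cos_two_mul, Real.sin_two_mul, Real.sin_two_mul]
      linear_combination (-4*(Real.sin α)^2) * pb + (-4*(1 - (Real.cos β)^2)) * pa]
    rw [mul_div_cancel_left₀ _ (by positivity)]
    rw [show -Real.cos (α+β) = Real.cos (π - (α+β)) by rw [Real.cos_pi_sub]]
    rw [Real.arccos_cos (by linarith) (by linarith)]
    linarith
end
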